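/- Let S be a normal integral scheme and let Z be an integral scheme equipped with a finite morphism p : Z → S. Suppose there exists a nonempty (hence dense) open subset U of S such that the restriction of p to p⁻¹(U) is an isomorphism onto U. Then p : Z → S is an isomorphism. -/

import Mathlib

open AlgebraicGeometry CategoryTheory

open Polynomial in
lemma aux_icc_of_ringEquiv {R S : Type*} [CommRing R] [CommRing S]
    (e : R ≃+* S) [IsIntegrallyClosed R] : IsIntegrallyClosed S := by
  rw [isIntegrallyClosed_iff (FractionRing S)]
  intro x hx
  let ε : FractionRing S ≃+* FractionRing R := IsFractionRing.ringEquivOfRingEquiv e.symm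
  have key : (algebraMap R (FractionRing R)).comp (e.symm : S →+* R)
      = (ε : FractionRing S →+* FractionRing R).comp (algebraMap S (FractionRing S)) := by
    ext s
    simp only [RingHom.comp_apply, RingHom.coe_coe, ε,
      IsFractionRing.ringEquivOfRingEquiv_algebraMap]
  have hx' : IsIntegral R (ε x) := by
    obtain ⟨P, hPm, hP⟩ := hx
    refine ⟨P.map (e.symm : S →+* R), hPm.map _, ?_⟩
    rw [eval₂_map, key]
    exact (Polynomial.hom_eval₂ P (algebraMap S (FractionRing S))
      (ε : FractionRing S →+* FractionRing R) x).symm.trans (by rw [hP, map_zero])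
  obtain ⟨y, hy⟩ := IsIntegrallyClosed.isIntegral_iff.mp hx'
  refine ⟨e y, ε.injective ?_⟩
  show ((ε : FractionRing S →+* FractionRing R).comp (algebraMap S (FractionRing S))) (e y) = ε x
  rw [← key]
  simpa using hy

lemma aux_ring_key {B A K : Type*} [CommRing B] [CommRing A] [Field K]
    [Algebra B K] [IsFractionRing B K] [IsIntegrallyClosed B]
    (φ : B →+* A) (hfin : φ.Finite) (j : A →+* K) (hj : Function.Injective j)
    (hcomp : j.comp φ = algebraMap B K) : Function.Bijective φ := by
  have hinj : Function.Injective (j.comp φ) := hcomp ▸ IsFractionRing.injective B K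
  refine ⟨fun a b hab => hinj (by simp [RingHom.comp_apply, hab]), fun a => ?_⟩
  letI : Algebra B A := φ.toAlgebra
  haveI : Module.Finite B A := hfin
  have ha : IsIntegral B a := IsIntegral.of_finite B a
  have hja : IsIntegral B (j a) := by
    obtain ⟨P, hPm, hP⟩ := ha
    refine ⟨P, hPm, ?_⟩
    have : algebraMap B A = φ := RingHom.algebraMap_toAlgebra φ
    rw [← hcomp, ← Polynomial.hom_eval₂, ← this, hP, map_zero]
  obtain ⟨b, hb⟩ := IsIntegrallyClosed.isIntegral_iff.mp hja
  exact ⟨b, hj (by rw [← RingHom.comp_apply, hcomp, hb])⟩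

open AlgebraicGeometry in
lemma aux_affine_case {X Y : Scheme} [IsIntegral X] [IsIntegral Y] [IsAffine X] [IsAffine Y]
    (f : X ⟶ Y) (hfin : RingHom.Finite f.appTop.hom)
    (hnormal : ∀ y : Y, IsIntegrallyClosed (Y.presheaf.stalk y))
    (hgen : f.base (genericPoint X) = genericPoint Y)
    (hstalk : IsIso (f.stalkMap (genericPoint X))) : IsIso f := by
  haveI : Nonempty Y := inferInstance
  haveI : Nonempty X := inferInstance
  haveI : Nonempty (⊤ : Y.Opens) := ⟨⟨Classical.arbitrary Y, trivial⟩⟩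
  haveI : Nonempty (⊤ : X.Opens) := ⟨⟨Classical.arbitrary X, trivial⟩⟩
  haveI fracY : IsFractionRing Γ(Y, ⊤) Y.functionField :=
    functionField_isFractionRing_of_isAffineOpen Y ⊤ (isAffineOpen_top Y)
  haveI fracX : IsFractionRing Γ(X, ⊤) X.functionField :=
    functionField_isFractionRing_of_isAffineOpen X ⊤ (isAffineOpen_top X)
  -- Γ(Y,⊤) is integrally closed
  haveI hicc : IsIntegrallyClosed Γ(Y, ⊤) := by
    apply IsIntegrallyClosed.of_localization_maximal
    intro m hm hmmax
    let hU := isAffineOpen_top Y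
    let q : PrimeSpectrum Γ(Y, ⊤) := ⟨m, hmmax.isPrime⟩
    let x : (⊤ : Y.Opens) := hU.isoSpec.inv.base q
    have hx : hU.primeIdealOf x = q := by
      show (hU.isoSpec.inv ≫ hU.isoSpec.hom).base q = q
      rw [Iso.inv_hom_id]
      rfl
    letI := Y.presheaf.algebra_section_stalk x
    haveI : IsLocalization.AtPrime (Y.presheaf.stalk x.1) m := by
      have h := hU.isLocalization_stalk x
      rwa [hx] at h
    haveI := hnormal x.1
    exact aux_icc_of_ringEquiv
      (IsLocalization.algEquiv m.primeCompl (Y.presheaf.stalk x.1)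
        (Localization.AtPrime m)).toRingEquiv
  -- function field comparison
  set ξ := genericPoint X with hξ
  have hmem : f.base ξ ∈ (⊤ : Y.Opens) := trivial
  let c : Y.functionField ⟶ Y.presheaf.stalk (f.base ξ) :=
    (Y.presheaf.stalkCongr (Inseparable.of_eq hgen.symm)).hom
  let e : Y.functionField ⟶ X.functionField := c ≫ f.stalkMap ξ
  haveI : IsIso c := inferInstance
  haveI : IsIso e := by unfold e; infer_instance
  have comm : f.appTop ≫ X.germToFunctionField ⊤ = Y.germToFunctionField ⊤ ≫ e := by
    have h1 : Y.germToFunctionField ⊤ ≫ c = Y.presheaf.germ ⊤ (f.base ξ) hmem := by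
      simp [c, TopCat.Presheaf.stalkCongr]
      exact Y.presheaf.germ_stalkSpecializes _ _
    have h2 := AlgebraicGeometry.Scheme.Hom.germ_stalkMap f ⊤ ξ hmem
    show f.appTop ≫ X.germToFunctionField ⊤ = (Y.germToFunctionField ⊤ ≫ c) ≫ f.stalkMap ξ
    rw [h1, h2]
    rfl
  let ε : Y.functionField ≃+* X.functionField := (asIso e).commRingCatIsoToRingEquiv
  let j : Γ(X, ⊤) →+* Y.functionField :=
    (ε.symm : X.functionField →+* Y.functionField).comp ((X.germToFunctionField ⊤).hom : Γ(X, ⊤) →+* X.functionField)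
  have hj : Function.Injective j :=
    ε.symm.injective.comp (X.germToFunctionField_injective ⊤)
  have hcomp : j.comp (f.appTop.hom : Γ(Y, ⊤) →+* Γ(X, ⊤)) = algebraMap Γ(Y, ⊤) Y.functionField := by
    ext b
    have := congrArg (fun (g : Γ(Y, ⊤) ⟶ X.functionField) => ε.symm (g b)) comm
    simp only [CommRingCat.comp_apply] at this
    show ε.symm (X.germToFunctionField ⊤ (f.appTop b)) = _
    rw [this]
    show ε.symm (ε (Y.germToFunctionField ⊤ b)) = _
    rw [ε.symm_apply_apply]
    rfl
  have hbij : Function.Bijective (f.appTop.hom : Γ(Y, ⊤) →+* Γ(X, ⊤)) :=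
    aux_ring_key _ hfin j hj hcomp
  haveI : IsIso f.appTop := (ConcreteCategory.isIso_iff_bijective f.appTop).mpr hbij
  exact (MorphismProperty.arrow_mk_iso_iff (MorphismProperty.isomorphisms _)
    (arrowIsoSpecΓOfIsAffine f)).mpr (inferInstanceAs (IsIso (Spec.map (f.appTop))))


/-- key step in the proof of Lemma 7.3 of the paper.
Let `S` be a normal integral scheme (normal: all stalks are integrally closed domains)
and `Z` an integral scheme with a finite morphism `p : Z ⟶ S`.  If there is a nonempty
open subset `U ⊆ S` over which `p` restricts to an isomorphism `p⁻¹(U) ≅ U`, then `p`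
itself is an isomorphism. -/
theorem stmt3 (S Z : Scheme) [IsIntegral S]
    (hnormal : ∀ s : S, IsIntegrallyClosed (S.presheaf.stalk s))
    [IsIntegral Z] (p : Z ⟶ S) [IsFinite p]
    (U : S.Opens) (hU : (U : Set S).Nonempty) (hiso : IsIso (p ∣_ U)) :
    IsIso p := by
  haveI := hiso
  -- U is dense
  have hdense : Dense (U : Set S) := U.isOpen.dense hU
  -- range of p contains U
  have hrange : (U : Set S) ⊆ Set.range p.base := by
    rintro s hs
    obtain ⟨w, hw⟩ := (p ∣_ U).surjective ⟨s, hs⟩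
    refine ⟨(p ⁻¹ᵁ U).ι.base w, ?_⟩
    have := congrArg (fun q : (p ⁻¹ᵁ U).toScheme ⟶ S => q.base w) (morphismRestrict_ι p U)
    simp only [Scheme.Hom.comp_apply] at this
    rw [← this, hw]
    rfl
  haveI hdom : IsDominant p := ⟨hdense.mono hrange⟩
  -- p is a closed map
  have hclosedmap : AlgebraicGeometry.topologically (@IsClosedMap) p := by
    apply IsZariskiLocalAtTarget.of_iSup_eq_top (U := fun V : S.affineOpens => V.1)
      (iSup_affineOpens_eq_top S)
    intro V
    haveI : IsAffine V.1.toScheme := V.2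
    haveI hfinV : IsFinite (p ∣_ V.1) := inferInstance
    haveI : IsAffine (p ⁻¹ᵁ V.1).toScheme := isAffine_of_isAffineHom (p ∣_ V.1)
    have hfin : RingHom.Finite ((p ∣_ V.1).appTop.hom) :=
      (p ∣_ V.1).finite_appTop
    refine (MorphismProperty.arrow_mk_iso_iff (P := AlgebraicGeometry.topologically (@IsClosedMap))
      (arrowIsoSpecΓOfIsAffine (p ∣_ V.1))).mpr ?_
    show IsClosedMap (Spec.map ((p ∣_ V.1).appTop)).base
    exact PrimeSpectrum.isClosedMap_comap_of_isIntegral _ hfin.to_isIntegral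
  have hclosed : IsClosed (Set.range p.base) := by
    have := hclosedmap Set.univ isClosed_univ
    rwa [Set.image_univ] at this
  haveI hsurj : Surjective p := surjective_of_isDominant_of_isClosed_range p hclosed
  -- generic points
  have hgen : p.base (genericPoint Z) = genericPoint S := by
    refine ((genericPoint_spec S).eq ?_).symm
    show closure {p.base (genericPoint Z)} = ⊤
    rw [eq_top_iff]
    have h1 : closure {genericPoint Z} = Set.univ := genericPoint_spec Z
    calc (⊤ : Set S) = p.base '' closure {genericPoint Z} := by
          rw [h1, Set.image_univ, p.surjective.range_eq]; rfl
      _ ⊆ closure (p.base '' {genericPoint Z}) :=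
          image_closure_subset_closure_image p.base.hom.2
      _ = closure {p.base (genericPoint Z)} := by rw [Set.image_singleton]
  -- generic point of Z lies in p ⁻¹ᵁ U
  have hZU : genericPoint Z ∈ p ⁻¹ᵁ U := by
    rw [← SetLike.mem_coe, (genericPoint_spec Z).mem_open_set_iff (p ⁻¹ᵁ U).isOpen]
    obtain ⟨s, hs⟩ := hU
    obtain ⟨z, hz⟩ := p.surjective s
    exact ⟨z, trivial, show p.base z ∈ U from hz ▸ hs⟩
  -- stalk maps over U are isomorphisms
  have key : ∀ (x : Z), x ∈ p ⁻¹ᵁ U → IsIso (p.stalkMap x) := by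
    intro x hx
    have harr := morphismRestrictStalkMap p U ⟨x, hx⟩
    have hgen' : ∀ {A B : Scheme} (g : A ⟶ B) [IsIso g] (a : A), IsIso (g.stalkMap a) :=
      fun _ _ a => inferInstance
    have hstep : IsIso ((p ∣_ U).stalkMap ⟨x, hx⟩) := hgen' (p ∣_ U) ⟨x, hx⟩
    exact (MorphismProperty.arrow_mk_iso_iff
      (MorphismProperty.isomorphisms CommRingCat) harr).mp hstep
  -- conclude via affine-local argument
  have : MorphismProperty.isomorphisms Scheme p := by
    apply IsZariskiLocalAtTarget.of_iSup_eq_top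
      (U := fun V : {V : S.affineOpens // (V.1.1 : Set S).Nonempty} => V.1.1) ?_ ?_
    · rw [eq_top_iff]
      intro s _
      have : s ∈ (⊤ : S.Opens) := trivial
      rw [← iSup_affineOpens_eq_top S] at this
      obtain ⟨V, hV⟩ := TopologicalSpace.Opens.mem_iSup.mp this
      exact TopologicalSpace.Opens.mem_iSup.mpr ⟨⟨V, ⟨s, hV⟩⟩, hV⟩
    · intro V
      set O : S.Opens := V.1.1 with hO
      haveI : IsAffine O.toScheme := V.1.2
      haveI : Nonempty O := V.2.to_subtype
      haveI hfinV : IsFinite (p ∣_ O) := inferInstance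
      haveI : IsAffine (p ⁻¹ᵁ O).toScheme := isAffine_of_isAffineHom (p ∣_ O)
      haveI : Nonempty (p ⁻¹ᵁ O) := by
        obtain ⟨s, hs⟩ := V.2
        obtain ⟨z, hz⟩ := p.surjective s
        exact ⟨⟨z, show p.base z ∈ O from hz ▸ hs⟩⟩
      have hfin : RingHom.Finite ((p ∣_ O).appTop.hom) :=
        (p ∣_ O).finite_appTop
      have hnormal' : ∀ y : O.toScheme, IsIntegrallyClosed (O.toScheme.presheaf.stalk y) := by
        intro y
        haveI := hnormal y.1
        exact aux_icc_of_ringEquiv (O.stalkIso y).symm.commRingCatIsoToRingEquiv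
      have hιW : (p ⁻¹ᵁ O).ι.base (genericPoint (p ⁻¹ᵁ O).toScheme) = genericPoint Z :=
        genericPoint_eq_of_isOpenImmersion (p ⁻¹ᵁ O).ι
      have hιO : O.ι.base (genericPoint O.toScheme) = genericPoint S :=
        genericPoint_eq_of_isOpenImmersion O.ι
      have hgenV : (p ∣_ O).base (genericPoint (p ⁻¹ᵁ O).toScheme) = genericPoint O.toScheme := by
        apply O.ι.isOpenEmbedding.injective
        have := congrArg (fun q : (p ⁻¹ᵁ O).toScheme ⟶ S => q.base (genericPoint (p ⁻¹ᵁ O).toScheme))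
          (morphismRestrict_ι p O)
        simp only [Scheme.Hom.comp_apply] at this
        rw [this, hιW, hgen, hιO]
      have hstalkV : IsIso ((p ∣_ O).stalkMap (genericPoint (p ⁻¹ᵁ O).toScheme)) := by
        have harr := morphismRestrictStalkMap p O (genericPoint (p ⁻¹ᵁ O).toScheme)
        refine (MorphismProperty.arrow_mk_iso_iff
          (MorphismProperty.isomorphisms CommRingCat) harr).mpr ?_
        have hmem : (p ⁻¹ᵁ O).ι.base (genericPoint (p ⁻¹ᵁ O).toScheme) ∈ p ⁻¹ᵁ U := by
          rw [hιW]; exact hZU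
        exact key _ hmem
      exact aux_affine_case (p ∣_ O) hfin hnormal' hgenV hstalkV
  exact this
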